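/- Let Γ be a finite group with a real representation (ρ,E), call γ ∈ Γ elliptic if E^{ρ(γ)} = 0, and let L be the set of subgroups H ≤ Γ with E^{ρ(H)} ≠ 0. Then the quotient Ell(Γ) = G_ℂ(Γ) / Σ_{H∈L} Ind_H^Γ(G_ℂ(H)) of the complexified Grothendieck group of finite-dimensional representations has dimension equal to the number of elliptic conjugacy classes of Γ. -/

import Mathlib

/- STATEMENT 11: dim Ell(Γ) equals the number of elliptic conjugacy classes. -/

open scoped Classical

noncomputable section

variable (Γ : Type) [Group Γ] [Fintype Γ]

/-- The complexified Grothendieck group `G_ℂ(Γ)` of finite-dimensional complex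
representations, realized as the space of virtual characters: the `ℂ`-span of
the characters inside the functions `Γ → ℂ`. -/
def charSpace : Submodule ℂ (Γ → ℂ) :=
  Submodule.span ℂ {f | ∃ W : FDRep ℂ Γ, f = FDRep.character W}

/-- The character of the representation induced from a subgroup `H ≤ Γ`
(given by the standard induced-character formula). -/
def indChar (H : Subgroup Γ) (f : ↥H → ℂ) : Γ → ℂ := fun γ =>
  (Nat.card ↥H : ℂ)⁻¹ *
    ∑ x : Γ, (if h : x⁻¹ * γ * x ∈ H then f ⟨x⁻¹ * γ * x, h⟩ else 0)

variable {E : Type} [AddCommGroup E] [Module ℝ E] [FiniteDimensional ℝ E]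

/-- `γ` is elliptic (w.r.t. the real representation `(ρ,E)`) when
`E^{ρ(γ)} = 0`. -/
def IsElliptic (ρ : Representation ℝ Γ E) (γ : Γ) : Prop :=
  ∀ v : E, ρ γ v = v → v = 0

/-- The span `Σ_{H ∈ L} Ind_H^Γ (G_ℂ(H))` of characters induced from the
subgroups `H` with `E^{ρ(H)} ≠ 0`. -/
def indSub (ρ : Representation ℝ Γ E) : Submodule ℂ (Γ → ℂ) :=
  Submodule.span ℂ {f | ∃ H : Subgroup Γ,
    (∃ v : E, v ≠ 0 ∧ ∀ h ∈ H, ρ h v = v) ∧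
    ∃ W : FDRep ℂ ↥H, f = indChar Γ H (FDRep.character W)}

set_option linter.unusedSectionVars false

def smulRep (M : Type) [AddCommGroup M] [Module ℂ M] [Module (MonoidAlgebra ℂ Γ) M]
    [IsScalarTower ℂ (MonoidAlgebra ℂ Γ) M] : Representation ℂ Γ M where
  toFun g :=
    { toFun := fun t => MonoidAlgebra.of ℂ Γ g • t
      map_add' := fun a b => smul_add _ a b
      map_smul' := fun c t => by
        haveI : SMulCommClass ℂ (MonoidAlgebra ℂ Γ) M := IsScalarTower.to_smulCommClass
        exact (smul_comm c (MonoidAlgebra.of ℂ Γ g) t).symm }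
  map_one' := by
    ext t
    show MonoidAlgebra.of ℂ Γ 1 • t = t
    rw [map_one, one_smul]
  map_mul' g h := by
    ext t
    show MonoidAlgebra.of ℂ Γ (g * h) • t = MonoidAlgebra.of ℂ Γ g • MonoidAlgebra.of ℂ Γ h • t
    rw [map_mul, mul_smul]

set_option linter.unusedSectionVars false in
lemma char_of_smulRep (M : Type) [AddCommGroup M] [Module ℂ M] [Module (MonoidAlgebra ℂ Γ) M]
    [IsScalarTower ℂ (MonoidAlgebra ℂ Γ) M] [FiniteDimensional ℂ M] (g : Γ) :
    (FDRep.of (smulRep Γ M)).character g = LinearMap.trace ℂ M (smulRep Γ M g) := rfl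

set_option maxHeartbeats 1000000 in
lemma eq_zero_of_orth (f : Γ → ℂ)
    (hf : ∀ g x : Γ, f (g * x * g⁻¹) = f x)
    (horth : ∀ V : FDRep ℂ Γ, ∑ x : Γ, f x * V.character x⁻¹ = 0) :
    f = 0 := by
  haveI : FiniteDimensional ℂ (MonoidAlgebra ℂ Γ) :=
    Module.Finite.equiv ((MonoidAlgebra.coeffLinearEquiv ℂ).trans (Finsupp.linearEquivFunOnFinite ℂ ℂ Γ)).symm
  set z : MonoidAlgebra ℂ Γ := ∑ x : Γ, f x • MonoidAlgebra.of ℂ Γ x⁻¹ with hzdef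
  have hofz : ∀ g : Γ, MonoidAlgebra.of ℂ Γ g * z = z * MonoidAlgebra.of ℂ Γ g := by
    intro g
    rw [hzdef, Finset.mul_sum, Finset.sum_mul]
    refine Fintype.sum_equiv ((MulAut.conj g).toEquiv) _ _ fun x => ?_
    rw [mul_smul_comm, smul_mul_assoc, ← map_mul, ← map_mul]
    have h1 : (MulAut.conj g).toEquiv x = g * x * g⁻¹ := rfl
    rw [h1, hf g x]
    congr 2
    group
  have hcomm : ∀ a : MonoidAlgebra ℂ Γ, a * z = z * a := by
    intro a
    refine MonoidAlgebra.induction_on (motive := fun a => a * z = z * a) a hofz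
      (fun a b ha hb => ?_) (fun r a ha => ?_)
    · show (a + b) * z = z * (a + b)
      rw [add_mul, mul_add, ha, hb]
    · show (r • a) * z = z * (r • a)
      rw [smul_mul_assoc, mul_smul_comm, ha]
  have hz0 : ∀ S : Submodule (MonoidAlgebra ℂ Γ) (MonoidAlgebra ℂ Γ),
      IsSimpleModule (MonoidAlgebra ℂ Γ) S → ∀ s ∈ S, z * s = 0 := by
    intro S hS s hs
    haveI hST : IsSimpleModule (MonoidAlgebra ℂ Γ) (S.restrictScalars ℂ) := hS
    haveI : Nontrivial (S.restrictScalars ℂ) :=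
      IsSimpleModule.nontrivial (MonoidAlgebra ℂ Γ) (S.restrictScalars ℂ)
    haveI : SMulCommClass ℂ (MonoidAlgebra ℂ Γ) (S.restrictScalars ℂ) :=
      IsScalarTower.to_smulCommClass
    set T := S.restrictScalars ℂ with hT
    let φ : T →ₗ[MonoidAlgebra ℂ Γ] T :=
      { toFun := fun t => z • t
        map_add' := fun t s => smul_add z t s
        map_smul' := fun a t => by
          simp only [RingHom.id_apply, smul_smul]
          rw [hcomm a] }
    obtain ⟨c, hc⟩ := Module.End.exists_eigenvalue (φ.restrictScalars ℂ)
    obtain ⟨v, hv⟩ := hc.exists_hasEigenvector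
    have hψ : φ - c • (LinearMap.id : T →ₗ[MonoidAlgebra ℂ Γ] T) = 0 := by
      rcases LinearMap.injective_or_eq_zero (φ - c • (LinearMap.id : T →ₗ[MonoidAlgebra ℂ Γ] T))
        with hinj | h0
      · exfalso
        have h1 : (φ - c • (LinearMap.id : T →ₗ[MonoidAlgebra ℂ Γ] T)) v = 0 := by
          have := hv.apply_eq_smul
          simp only [LinearMap.sub_apply, LinearMap.smul_apply, LinearMap.id_apply]
          rw [show φ v = c • v from this, sub_self]
        exact hv.2 (hinj (by rw [h1, map_zero]))
      · exact h0
    have hφc : ∀ t : T, φ t = c • t := by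
      intro t
      have := DFunLike.congr_fun hψ t
      simpa [sub_eq_zero] using this
    have htr1 : LinearMap.trace ℂ T (φ.restrictScalars ℂ) = c * (Module.finrank ℂ T : ℂ) := by
      have h2 : φ.restrictScalars ℂ = c • (LinearMap.id : T →ₗ[ℂ] T) :=
        LinearMap.ext fun t => hφc t
      rw [h2, map_smul, LinearMap.trace_id, smul_eq_mul]
    have htr2 : LinearMap.trace ℂ T (φ.restrictScalars ℂ) = 0 := by
      have h3 : φ.restrictScalars ℂ = ∑ x : Γ, f x • (smulRep Γ T x⁻¹) := by
        refine LinearMap.ext fun t => ?_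
        show z • t = _
        rw [hzdef, Finset.sum_smul]
        simp only [LinearMap.coe_sum, Finset.sum_apply, LinearMap.smul_apply]
        refine Finset.sum_congr rfl fun x _ => ?_
        rw [smul_assoc]
        rfl
      rw [h3, map_sum]
      have h4 := horth (FDRep.of (smulRep Γ T))
      rw [← h4]
      refine Finset.sum_congr rfl fun x _ => ?_
      rw [map_smul, char_of_smulRep, smul_eq_mul]
    have hc0 : c = 0 := by
      have hfr : (Module.finrank ℂ T : ℂ) ≠ 0 := by
        exact_mod_cast (Module.finrank_pos (R := ℂ) (M := T)).ne'
      exact (mul_eq_zero.mp (htr1.symm.trans htr2)).resolve_right hfr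
    have h6 : φ ⟨s, hs⟩ = 0 := by rw [hφc, hc0, zero_smul]
    exact congrArg Subtype.val h6
  -- conclude z = 0
  have hz : z = 0 := by
    have hker : (⊤ : Submodule (MonoidAlgebra ℂ Γ) (MonoidAlgebra ℂ Γ)) ≤
        LinearMap.ker
          ({ toFun := fun a => z * a
             map_add' := fun a b => mul_add z a b
             map_smul' := fun a b => by
               simp only [RingHom.id_apply, smul_eq_mul]
               rw [← mul_assoc, ← hcomm a, mul_assoc] } :
            MonoidAlgebra ℂ Γ →ₗ[MonoidAlgebra ℂ Γ] MonoidAlgebra ℂ Γ) := by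
      rw [← IsSemisimpleModule.sSup_simples_eq_top]
      refine sSup_le fun S hS => ?_
      intro s hs
      exact hz0 S hS s hs
    have := hker (Submodule.mem_top (x := 1))
    simpa using this
  funext y
  show f y = 0
  have h7 : ((Finsupp.applyAddHom (y⁻¹ : Γ) : (Γ →₀ ℂ) →+ ℂ).comp MonoidAlgebra.coeffAddEquiv.toAddMonoidHom) z = 0 := by rw [hz]; simp
  rw [hzdef, map_sum] at h7
  simp only [AddMonoidHom.coe_comp, Function.comp_apply, AddEquiv.coe_toAddMonoidHom,
    MonoidAlgebra.coeffAddEquiv_apply, MonoidAlgebra.coeff_smul, MonoidAlgebra.coeff_single,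
    Finsupp.applyAddHom_apply, MonoidAlgebra.of_apply, MonoidAlgebra.smul_single',
    mul_one, Finsupp.smul_single, smul_eq_mul, Finsupp.single_apply, inv_inj] at h7
  rw [Finset.sum_ite_eq' Finset.univ y f] at h7
  simpa using h7

def classFun : Submodule ℂ (Γ → ℂ) where
  carrier := {f | ∀ g x : Γ, f (g * x * g⁻¹) = f x}
  add_mem' := fun ha hb g x => by simp only [Pi.add_apply, ha g x, hb g x]
  zero_mem' := fun g x => rfl
  smul_mem' := fun c a ha g x => by simp only [Pi.smul_apply, ha g x]

lemma classFun_isConj {f : Γ → ℂ} (hf : f ∈ classFun Γ) {x y : Γ} (h : IsConj x y) :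
    f x = f y := by
  obtain ⟨c, hc⟩ := isConj_iff.mp h
  rw [← hc]; exact (hf c x).symm

lemma charSpace_eq_classFun : charSpace Γ = classFun Γ := by
  have hle : charSpace Γ ≤ classFun Γ := by
    rw [charSpace, Submodule.span_le]
    rintro f ⟨W, rfl⟩ g x
    exact W.char_conj x g
  refine (Submodule.eq_of_le_of_finrank_le hle ?_)
  let B : (Γ → ℂ) →ₗ[ℂ] Module.Dual ℂ (Γ → ℂ) :=
    { toFun := fun f =>
        { toFun := fun g => ∑ x : Γ, f x * g x⁻¹
          map_add' := fun a b => by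
            simp only [Pi.add_apply, mul_add, Finset.sum_add_distrib]
          map_smul' := fun c a => by
            simp only [Pi.smul_apply, smul_eq_mul, RingHom.id_apply, Finset.mul_sum]
            exact Finset.sum_congr rfl fun x _ => by ring }
      map_add' := fun a b => by
        refine LinearMap.ext fun g => ?_
        simp only [Pi.add_apply, add_mul, Finset.sum_add_distrib, LinearMap.coe_mk,
          AddHom.coe_mk, LinearMap.add_apply]
      map_smul' := fun c a => by
        refine LinearMap.ext fun g => ?_
        simp only [Pi.smul_apply, smul_eq_mul, RingHom.id_apply, LinearMap.coe_mk,
          AddHom.coe_mk, LinearMap.smul_apply, Finset.mul_sum]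
        exact Finset.sum_congr rfl fun x _ => by ring }
  let Ψ : ↥(classFun Γ) →ₗ[ℂ] Module.Dual ℂ ↥(charSpace Γ) :=
    { toFun := fun f => (B f.1).comp (Submodule.subtype _)
      map_add' := fun a b => by
        simp only [Submodule.coe_add, map_add, LinearMap.add_comp]
      map_smul' := fun c a => by
        simp only [Submodule.coe_smul, map_smul, RingHom.id_apply, LinearMap.smul_comp] }
  have hinj : Function.Injective Ψ := by
    rw [injective_iff_map_eq_zero]
    intro f hf0
    ext1
    refine eq_zero_of_orth Γ f.1 f.2 fun V => ?_
    have hmem : FDRep.character V ∈ charSpace Γ := Submodule.subset_span ⟨V, rfl⟩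
    have := DFunLike.congr_fun hf0 ⟨FDRep.character V, hmem⟩
    simpa [Ψ, B] using this
  have h1 : Module.finrank ℂ (classFun Γ) ≤ Module.finrank ℂ (Module.Dual ℂ (charSpace Γ)) :=
    LinearMap.finrank_le_finrank_of_injective hinj
  rwa [Subspace.dual_finrank_eq] at h1

/-- One-dimensional representation attached to a `ℂ`-valued monoid hom. -/
def oneDimRep {H : Type} [Group H] (u : H →* ℂ) : Representation ℂ H ℂ where
  toFun h := u h • LinearMap.id
  map_one' := by
    refine LinearMap.ext fun t => ?_
    simp
  map_mul' a b := by
    refine LinearMap.ext fun t => ?_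
    simp only [Module.End.mul_apply, map_mul, mul_smul, LinearMap.smul_apply, LinearMap.id_apply,
      smul_eq_mul]

lemma char_oneDimRep {H : Type} [Group H] (u : H →* ℂ) (h : H) :
    (FDRep.of (oneDimRep u)).character h = u h := by
  have h1 : (FDRep.of (oneDimRep u)).character h = LinearMap.trace ℂ ℂ (oneDimRep u h) := rfl
  rw [h1]
  show LinearMap.trace ℂ ℂ (u h • LinearMap.id) = u h
  rw [map_smul, LinearMap.trace_id, smul_eq_mul, Module.finrank_self]
  simp

lemma delta_mem_span_char (γ : Γ) :
    (fun h : ↥(Subgroup.zpowers γ) => if (h : Γ) = γ then (1:ℂ) else 0) ∈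
      Submodule.span ℂ {f : ↥(Subgroup.zpowers γ) → ℂ |
        ∃ W : FDRep ℂ ↥(Subgroup.zpowers γ), f = FDRep.character W} := by
  set H := Subgroup.zpowers γ with hH
  set n := orderOf γ with hndef
  have hn : n ≠ 0 := (orderOf_pos γ).ne'
  set ζ := Complex.exp (2 * Real.pi * Complex.I / n) with hzeta
  have hζ : IsPrimitiveRoot ζ n := Complex.isPrimitiveRoot_exp n hn
  have hζ0 : ζ ≠ 0 := by
    intro h0
    exact Complex.exp_ne_zero _ (by rw [← hzeta, h0])
  have key : ∀ a b : ℤ, γ ^ a = γ ^ b → ζ ^ a = ζ ^ b := by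
    intro a b hab
    have h1 : γ ^ (a - b) = 1 := by
      rw [sub_eq_add_neg, zpow_add, hab, zpow_neg, mul_inv_cancel]
    have h2 : (n : ℤ) ∣ (a - b) := orderOf_dvd_iff_zpow_eq_one.mpr h1
    have h3 : ζ ^ (a - b) = 1 := (hζ.zpow_eq_one_iff_dvd _).mpr h2
    calc ζ ^ a = ζ ^ (b + (a - b)) := by ring_nf
    _ = ζ ^ b * ζ ^ (a - b) := zpow_add₀ hζ0 _ _
    _ = ζ ^ b := by rw [h3, mul_one]
  have hkex : ∀ h : ↥H, ∃ m : ℤ, γ ^ m = (h : Γ) := fun h => Subgroup.mem_zpowers_iff.mp h.2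
  set k : ↥H → ℤ := fun h => (hkex h).choose with hkdef
  have hk : ∀ h : ↥H, γ ^ (k h) = (h : Γ) := fun h => (hkex h).choose_spec
  let χ : ↥H →* ℂ :=
    { toFun := fun h => ζ ^ (k h)
      map_one' := by
        have := key (k 1) 0 (by rw [hk]; simp)
        simpa using this
      map_mul' := fun a b => by
        have h1 : γ ^ (k (a * b)) = γ ^ (k a + k b) := by
          rw [hk, zpow_add, hk, hk]; rfl
        have h2 := key _ _ h1
        show ζ ^ (k (a * b)) = ζ ^ (k a) * ζ ^ (k b)
        rw [h2, zpow_add₀ hζ0] }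
  have hχ0 : ∀ h, χ h ≠ 0 := fun h => zpow_ne_zero _ hζ0
  have hχinj : ∀ h h' : ↥H, χ h = χ h' → h = h' := by
    intro h h' he
    have h1 : ζ ^ (k h - k h') = 1 := by
      rw [zpow_sub₀ hζ0]
      rw [show (χ h : ℂ) = ζ ^ (k h) from rfl] at he
      rw [he]
      exact div_self (zpow_ne_zero _ hζ0)
    have h2 : (n : ℤ) ∣ (k h - k h') := (hζ.zpow_eq_one_iff_dvd _).mp h1
    have h3 : γ ^ (k h - k h') = 1 := orderOf_dvd_iff_zpow_eq_one.mp h2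
    have h4 : γ ^ (k h) = γ ^ (k h') := by
      rw [sub_eq_add_neg, zpow_add, zpow_neg] at h3
      exact mul_inv_eq_one.mp h3
    exact Subtype.ext (by rw [← hk h, ← hk h', h4])
  set γs : ↥H := ⟨γ, Subgroup.mem_zpowers γ⟩ with hγs
  -- the characters
  let u : ℕ → (↥H →* ℂ) := fun j =>
    { toFun := fun h => (χ h) ^ j
      map_one' := by simp
      map_mul' := fun a b => by simp [map_mul, mul_pow] }
  have hcard : Nat.card ↥H = n := Nat.card_zpowers γ
  have hdelta : (fun h : ↥H => if (h : Γ) = γ then (1:ℂ) else 0) =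
      ∑ j ∈ Finset.range n, ((n : ℂ)⁻¹ * ((χ γs) ^ j)⁻¹) • (fun h : ↥H => (χ h) ^ j) := by
    funext h
    have hsum : (∑ j ∈ Finset.range n, ((n : ℂ)⁻¹ * ((χ γs) ^ j)⁻¹) • (fun h : ↥H => (χ h) ^ j)) h
        = ∑ j ∈ Finset.range n, (n : ℂ)⁻¹ * ((χ h * (χ γs)⁻¹) ^ j) := by
      rw [Finset.sum_apply]
      refine Finset.sum_congr rfl fun j _ => ?_
      simp only [Pi.smul_apply, smul_eq_mul, mul_pow, inv_pow]
      ring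
    rw [hsum, ← Finset.mul_sum]
    set w : ℂ := χ h * (χ γs)⁻¹ with hw
    have hwn : w ^ n = 1 := by
      have h5 : χ (γs⁻¹) = (χ γs)⁻¹ :=
        eq_inv_of_mul_eq_one_left (by rw [← map_mul, inv_mul_cancel, map_one])
      have h6 : w = χ (h * γs⁻¹) := by rw [map_mul, h5]
      have h7 : (h * γs⁻¹ : ↥H) ^ n = 1 := by
        rw [← hcard]
        exact pow_card_eq_one'
      rw [h6, ← map_pow, h7, map_one]
    by_cases hh : (h : Γ) = γ
    · have hhγ : h = γs := Subtype.ext hh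
      have hw1 : w = 1 := by rw [hw, hhγ]; exact mul_inv_cancel₀ (hχ0 γs)
      rw [if_pos hh, hw1]
      simp only [one_pow, Finset.sum_const, Finset.card_range, nsmul_eq_mul, mul_one]
      rw [inv_mul_cancel₀ (Nat.cast_ne_zero.mpr hn)]
    · have hw1 : w ≠ 1 := by
        intro h8
        exact hh (congrArg Subtype.val (hχinj h γs ((mul_inv_eq_one₀ (hχ0 γs)).mp h8)))
      rw [if_neg hh, geom_sum_eq hw1, hwn, sub_self, zero_div, mul_zero]
  rw [hdelta]
  refine Submodule.sum_mem _ fun j _ => Submodule.smul_mem _ _ (Submodule.subset_span ?_)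
  exact ⟨FDRep.of (oneDimRep (u j)), funext fun h => (char_oneDimRep (u j) h).symm⟩

lemma isElliptic_conj {ρ : Representation ℝ Γ E} {γ : Γ} (h : IsElliptic Γ ρ γ) (x : Γ) :
    IsElliptic Γ ρ (x⁻¹ * γ * x) := by
  intro v hv
  have e1 : ρ γ (ρ x v) = ρ x v := by
    have h2 : ρ x (ρ (x⁻¹ * γ * x) v) = ρ x v := congrArg _ hv
    rwa [← Module.End.mul_apply, ← map_mul, show x * (x⁻¹ * γ * x) = γ * x by group,
      map_mul, Module.End.mul_apply] at h2
  have e2 : ρ x v = 0 := h _ e1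
  have e3 : ρ x⁻¹ (ρ x v) = v := by
    rw [← Module.End.mul_apply, ← map_mul, inv_mul_cancel, map_one, Module.End.one_apply]
  rw [e2, map_zero] at e3
  exact e3.symm

/-- Class functions vanishing on elliptic elements. -/
def ellVanish (ρ : Representation ℝ Γ E) : Submodule ℂ (Γ → ℂ) where
  carrier := {f | (∀ g x : Γ, f (g * x * g⁻¹) = f x) ∧
    ∀ γ : Γ, IsElliptic Γ ρ γ → f γ = 0}
  add_mem' := fun ha hb =>
    ⟨fun g x => by simp only [Pi.add_apply, ha.1 g x, hb.1 g x],
     fun γ hγ => by simp only [Pi.add_apply, ha.2 γ hγ, hb.2 γ hγ, add_zero]⟩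
  zero_mem' := ⟨fun g x => rfl, fun γ _ => rfl⟩
  smul_mem' := fun c a ha =>
    ⟨fun g x => by simp only [Pi.smul_apply, ha.1 g x],
     fun γ hγ => by simp only [Pi.smul_apply, ha.2 γ hγ, smul_zero]⟩

/-- `indChar` as a linear map. -/
def indCharL (H : Subgroup Γ) : (↥H → ℂ) →ₗ[ℂ] (Γ → ℂ) where
  toFun := indChar Γ H
  map_add' := fun a b => by
    funext γ
    show (Nat.card ↥H : ℂ)⁻¹ * _ = _
    simp only [indChar, Pi.add_apply]
    rw [← mul_add, ← Finset.sum_add_distrib]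
    congr 1
    refine Finset.sum_congr rfl fun x _ => ?_
    split_ifs with h
    · rfl
    · rw [add_zero]
  map_smul' := fun c a => by
    funext γ
    simp only [indChar, Pi.smul_apply, RingHom.id_apply, smul_eq_mul]
    have hs : ∀ x : Γ, (if h : x⁻¹ * γ * x ∈ H then c * a ⟨x⁻¹ * γ * x, h⟩ else 0) =
        c * (if h : x⁻¹ * γ * x ∈ H then a ⟨x⁻¹ * γ * x, h⟩ else 0) := fun x => by
      split_ifs with h
      · rfl
      · rw [mul_zero]
    rw [Finset.sum_congr rfl fun x _ => hs x, ← Finset.mul_sum]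
    ring

lemma indChar_conj (H : Subgroup Γ) (φ : ↥H → ℂ) (g x : Γ) :
    indChar Γ H φ (g * x * g⁻¹) = indChar Γ H φ x := by
  simp only [indChar]
  congr 1
  refine Fintype.sum_equiv (Equiv.mulLeft g⁻¹) _ _ fun y => ?_
  rw [show (Equiv.mulLeft g⁻¹) y = g⁻¹ * y from rfl]
  simp only [show y⁻¹ * (g * x * g⁻¹) * y = (g⁻¹ * y)⁻¹ * x * (g⁻¹ * y) by group]

lemma indSub_le_ellVanish (ρ : Representation ℝ Γ E) : indSub Γ ρ ≤ ellVanish Γ ρ := by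
  rw [indSub, Submodule.span_le]
  rintro f ⟨H, ⟨v, hv0, hvfix⟩, W, rfl⟩
  refine ⟨fun g x => indChar_conj Γ H _ g x, fun γ hγ => ?_⟩
  simp only [indChar]
  have hterm : ∀ x : Γ,
      (if h : x⁻¹ * γ * x ∈ H then FDRep.character W ⟨x⁻¹ * γ * x, h⟩ else 0) = 0 := by
    intro x
    split_ifs with h
    · exact absurd ((isElliptic_conj Γ hγ x) v (hvfix _ h)) hv0
    · rfl
  rw [Finset.sum_congr rfl fun x _ => hterm x]
  simp

lemma dfun_mem (ρ : Representation ℝ Γ E) (γ : Γ) (hne : ¬ IsElliptic Γ ρ γ) :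
    (fun x : Γ => if ConjClasses.mk x = ConjClasses.mk γ then (1:ℂ) else 0) ∈ indSub Γ ρ := by
  simp only [IsElliptic, not_forall] at hne
  obtain ⟨v, hvfix, hv0⟩ := hne
  set H := Subgroup.zpowers γ with hHdef
  have hfixH : ∀ h ∈ H, ρ h v = v := by
    let K : Subgroup Γ :=
      { carrier := {h | ρ h v = v}
        one_mem' := by simp
        mul_mem' := fun {a b} ha hb => by
          show ρ (a * b) v = v
          rw [map_mul, Module.End.mul_apply, hb, ha]
        inv_mem' := fun {a} ha => by
          show ρ a⁻¹ v = v
          conv_lhs => rw [← ha]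
          rw [← Module.End.mul_apply, ← map_mul, inv_mul_cancel, map_one, Module.End.one_apply] }
    intro h hh
    exact (Subgroup.zpowers_le.mpr (show γ ∈ K from hvfix)) hh
  -- the delta function on H
  set δ : ↥H → ℂ := fun h => if (h : Γ) = γ then (1:ℂ) else 0 with hδdef
  have hind : indChar Γ H δ ∈ indSub Γ ρ := by
    have h1 := delta_mem_span_char Γ γ
    have h2 : indChar Γ H δ = indCharL Γ H δ := rfl
    rw [h2]
    have h3 : indCharL Γ H δ ∈ Submodule.map (indCharL Γ H)
        (Submodule.span ℂ {f : ↥H → ℂ | ∃ W : FDRep ℂ ↥H, f = FDRep.character W}) :=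
      Submodule.mem_map_of_mem h1
    rw [Submodule.map_span] at h3
    refine Submodule.span_le.mpr ?_ h3
    rintro _ ⟨f0, ⟨W, rfl⟩, rfl⟩
    exact Submodule.subset_span ⟨H, ⟨v, hv0, hfixH⟩, W, rfl⟩
  set m : ℕ := (Finset.univ.filter (fun x : Γ => x⁻¹ * γ * x = γ)).card with hmdef
  have hm0 : m ≠ 0 := by
    rw [hmdef]
    refine Finset.card_ne_zero_of_mem (a := (1:Γ)) ?_
    simp
  have hc0 : (Nat.card ↥H : ℂ) ≠ 0 := by
    exact_mod_cast Nat.card_pos.ne'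
  have hcompute : indChar Γ H δ =
      ((Nat.card ↥H : ℂ)⁻¹ * m) •
        (fun x : Γ => if ConjClasses.mk x = ConjClasses.mk γ then (1:ℂ) else 0) := by
    funext γ'
    have hterm : ∀ x : Γ,
        (if h : x⁻¹ * γ' * x ∈ H then δ ⟨x⁻¹ * γ' * x, h⟩ else 0) =
        (if x⁻¹ * γ' * x = γ then (1:ℂ) else 0) := by
      intro x
      by_cases hmem : x⁻¹ * γ' * x ∈ H
      · rw [dif_pos hmem]
      · rw [dif_neg hmem, if_neg]
        intro he
        exact hmem (he ▸ Subgroup.mem_zpowers γ)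
    show (Nat.card ↥H : ℂ)⁻¹ * _ = _
    rw [Finset.sum_congr rfl fun x _ => hterm x, Finset.sum_boole]
    simp only [Pi.smul_apply, smul_eq_mul]
    by_cases hcj : ConjClasses.mk γ' = ConjClasses.mk γ
    · have hfc : (Finset.univ.filter (fun x : Γ => x⁻¹ * γ' * x = γ)).card = m := by
        obtain ⟨c₀, hc₀⟩ := isConj_iff.mp (ConjClasses.mk_eq_mk_iff_isConj.mp hcj)
        set x₀ : Γ := c₀⁻¹ with hx₀
        have hx₀γ : x₀⁻¹ * γ' * x₀ = γ := by rw [hx₀]; simpa using hc₀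
        rw [hmdef]
        refine Finset.card_bij (fun y _ => x₀⁻¹ * y) ?_ ?_ ?_
        · intro y hy
          simp only [Finset.mem_filter, Finset.mem_univ, true_and] at hy ⊢
          have hγ' : γ' = x₀ * γ * x₀⁻¹ := by rw [← hx₀γ]; group
          calc (x₀⁻¹ * y)⁻¹ * γ * (x₀⁻¹ * y) = y⁻¹ * (x₀ * γ * x₀⁻¹) * y := by group
          _ = y⁻¹ * γ' * y := by rw [← hγ']
          _ = γ := hy
        · intro a _ b _ hab
          exact mul_left_cancel hab
        · intro z hz
          simp only [Finset.mem_filter, Finset.mem_univ, true_and] at hz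
          refine ⟨x₀ * z, ?_, by group⟩
          simp only [Finset.mem_filter, Finset.mem_univ, true_and]
          have hγ' : γ' = x₀ * γ * x₀⁻¹ := by rw [← hx₀γ]; group
          rw [hγ']
          calc (x₀ * z)⁻¹ * (x₀ * γ * x₀⁻¹) * (x₀ * z) = z⁻¹ * γ * z := by group
          _ = γ := hz
      rw [hfc, if_pos (by rw [hcj]), mul_one]
    · have hfc : (Finset.univ.filter (fun x : Γ => x⁻¹ * γ' * x = γ)).card = 0 := by
        rw [Finset.card_eq_zero]
        refine Finset.filter_eq_empty_iff.mpr ?_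
        intro x _
        intro he
        exact hcj (ConjClasses.mk_eq_mk_iff_isConj.mpr (isConj_iff.mpr ⟨x⁻¹, by simpa using he⟩))
      rw [hfc, if_neg (by rw [eq_comm] at hcj ⊢; exact hcj)]
      simp
  have : (fun x : Γ => if ConjClasses.mk x = ConjClasses.mk γ then (1:ℂ) else 0) =
      ((Nat.card ↥H : ℂ)⁻¹ * m)⁻¹ • indChar Γ H δ := by
    rw [hcompute, smul_smul, inv_mul_cancel₀, one_smul]
    exact mul_ne_zero (inv_ne_zero hc0) (Nat.cast_ne_zero.mpr hm0)
  rw [this]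
  exact Submodule.smul_mem _ _ hind

lemma ellVanish_le_indSub (ρ : Representation ℝ Γ E) : ellVanish Γ ρ ≤ indSub Γ ρ := by
  rintro f ⟨hcls, hvan⟩
  letI : Fintype (ConjClasses Γ) := Fintype.ofFinite _
  have hrep : ∀ c : ConjClasses Γ, ConjClasses.mk ((ConjClasses.exists_rep c).choose) = c :=
    fun c => (ConjClasses.exists_rep c).choose_spec
  set crep : ConjClasses Γ → Γ := fun c => (ConjClasses.exists_rep c).choose with hcrep
  have hdecomp : f = ∑ c : ConjClasses Γ, f (crep c) •
      (fun x : Γ => if ConjClasses.mk x = ConjClasses.mk (crep c) then (1:ℂ) else 0) := by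
    funext x
    rw [Finset.sum_apply]
    have : ∀ c : ConjClasses Γ,
        (f (crep c) • (fun x : Γ => if ConjClasses.mk x = ConjClasses.mk (crep c) then (1:ℂ) else 0)) x
        = if ConjClasses.mk x = c then f (crep c) else 0 := by
      intro c
      simp only [Pi.smul_apply, smul_eq_mul, show ConjClasses.mk (crep c) = c from hrep c, mul_ite, mul_one, mul_zero]
    rw [Finset.sum_congr rfl fun c _ => this c, Finset.sum_ite_eq Finset.univ (ConjClasses.mk x)]
    simp only [Finset.mem_univ, if_true]
    obtain ⟨c₀, hc₀⟩ := isConj_iff.mp (ConjClasses.mk_eq_mk_iff_isConj.mp (hrep (ConjClasses.mk x)))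
    have h9 := hcls c₀ (crep (ConjClasses.mk x))
    rw [hc₀] at h9
    exact h9
  rw [hdecomp]
  refine Submodule.sum_mem _ fun c _ => ?_
  by_cases hell : IsElliptic Γ ρ (crep c)
  · rw [hvan _ hell, zero_smul]
    exact Submodule.zero_mem _
  · exact Submodule.smul_mem _ _ (dfun_mem Γ ρ (crep c) hell)

lemma indSub_eq_ellVanish (ρ : Representation ℝ Γ E) : indSub Γ ρ = ellVanish Γ ρ :=
  le_antisymm (indSub_le_ellVanish Γ ρ) (ellVanish_le_indSub Γ ρ)


lemma isElliptic_of_isConj {ρ : Representation ℝ Γ E} {a b : Γ} (hab : IsConj a b)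
    (h : IsElliptic Γ ρ a) : IsElliptic Γ ρ b := by
  obtain ⟨c, hc⟩ := isConj_iff.mp hab
  have h2 := isElliptic_conj Γ h c⁻¹
  rw [inv_inv] at h2
  rwa [hc] at h2

def crep (c : ConjClasses Γ) : Γ := (ConjClasses.exists_rep c).choose

lemma mk_crep (c : ConjClasses Γ) : ConjClasses.mk (crep Γ c) = c :=
  (ConjClasses.exists_rep c).choose_spec

lemma classFun_apply_crep {f : Γ → ℂ} (hf : f ∈ classFun Γ) (x : Γ) :
    f (crep Γ (ConjClasses.mk x)) = f x := by
  obtain ⟨c₀, hc₀⟩ := isConj_iff.mp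
    (ConjClasses.mk_eq_mk_iff_isConj.mp (mk_crep Γ (ConjClasses.mk x)))
  have h9 := hf c₀ (crep Γ (ConjClasses.mk x))
  rw [hc₀] at h9
  exact h9.symm

def classFunEquiv : ↥(classFun Γ) ≃ₗ[ℂ] (ConjClasses Γ → ℂ) where
  toFun f := fun c => f.1 (crep Γ c)
  map_add' a b := rfl
  map_smul' c a := rfl
  invFun g := ⟨fun x => g (ConjClasses.mk x), fun u x => by
    show g (ConjClasses.mk (u * x * u⁻¹)) = g (ConjClasses.mk x)
    rw [ConjClasses.mk_eq_mk_iff_isConj.mpr ((isConj_iff (a := u*x*u⁻¹) (b := x)).mpr ⟨u⁻¹, by group⟩)]⟩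
  left_inv f := Subtype.ext (funext fun x => classFun_apply_crep Γ f.2 x)
  right_inv g := funext fun c => by simp only [mk_crep]

lemma finrank_classFun : Module.finrank ℂ ↥(classFun Γ) = Nat.card (ConjClasses Γ) := by
  letI : Fintype (ConjClasses Γ) := Fintype.ofFinite _
  rw [(classFunEquiv Γ).finrank_eq, Module.finrank_pi, Nat.card_eq_fintype_card]

lemma elliptic_crep_iff (ρ : Representation ℝ Γ E) (x : Γ) :
    IsElliptic Γ ρ (crep Γ (ConjClasses.mk x)) ↔ IsElliptic Γ ρ x := by
  have h1 := ConjClasses.mk_eq_mk_iff_isConj.mp (mk_crep Γ (ConjClasses.mk x))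
  exact ⟨fun h => isElliptic_of_isConj Γ h1 h, fun h => isElliptic_of_isConj Γ h1.symm h⟩

def ellVanishEquiv (ρ : Representation ℝ Γ E) : ↥(ellVanish Γ ρ) ≃ₗ[ℂ]
    ({c : ConjClasses Γ // ¬ IsElliptic Γ ρ (crep Γ c)} → ℂ) where
  toFun f := fun c => f.1 (crep Γ c.1)
  map_add' a b := rfl
  map_smul' c a := rfl
  invFun g := ⟨fun x => if h : ¬ IsElliptic Γ ρ (crep Γ (ConjClasses.mk x))
      then g ⟨ConjClasses.mk x, h⟩ else 0,
    by
      constructor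
      · intro u x
        have he : ConjClasses.mk (u * x * u⁻¹) = ConjClasses.mk x :=
          ConjClasses.mk_eq_mk_iff_isConj.mpr ((isConj_iff (a := u*x*u⁻¹) (b := x)).mpr ⟨u⁻¹, by group⟩)
        show (if h : ¬ IsElliptic Γ ρ (crep Γ (ConjClasses.mk (u * x * u⁻¹)))
            then g ⟨ConjClasses.mk (u * x * u⁻¹), h⟩ else 0) =
          (if h : ¬ IsElliptic Γ ρ (crep Γ (ConjClasses.mk x))
            then g ⟨ConjClasses.mk x, h⟩ else 0)
        simp only [he]
      · intro γ hγ
        show (if h : ¬ IsElliptic Γ ρ (crep Γ (ConjClasses.mk γ))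
            then g ⟨ConjClasses.mk γ, h⟩ else 0) = 0
        rw [dif_neg]
        rw [not_not, elliptic_crep_iff]
        exact hγ⟩
  left_inv f := Subtype.ext (funext fun x => by
    show (if h : ¬ IsElliptic Γ ρ (crep Γ (ConjClasses.mk x))
        then f.1 (crep Γ (ConjClasses.mk x)) else 0) = f.1 x
    by_cases h : IsElliptic Γ ρ (crep Γ (ConjClasses.mk x))
    · rw [dif_neg (not_not.mpr h)]
      exact ((f.2.2 x ((elliptic_crep_iff Γ ρ x).mp h))).symm
    · rw [dif_pos h]
      exact classFun_apply_crep Γ f.2.1 x)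
  right_inv g := funext fun c => by
    show (if h : ¬ IsElliptic Γ ρ (crep Γ (ConjClasses.mk (crep Γ c.1)))
        then g ⟨ConjClasses.mk (crep Γ c.1), h⟩ else 0) = g c
    simp only [mk_crep]
    rw [dif_pos c.2]

lemma finrank_ellVanish (ρ : Representation ℝ Γ E) : Module.finrank ℂ ↥(ellVanish Γ ρ) =
    Nat.card {c : ConjClasses Γ // ¬ IsElliptic Γ ρ (crep Γ c)} := by
  letI : Fintype (ConjClasses Γ) := Fintype.ofFinite _
  rw [(ellVanishEquiv Γ ρ).finrank_eq, Module.finrank_pi, Nat.card_eq_fintype_card]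

set_option maxHeartbeats 1000000 in
set_option synthInstance.maxHeartbeats 200000 in
/-- The dimension of the elliptic quotient
`Ell(Γ) = G_ℂ(Γ) / Σ_{H ∈ L} Ind_H^Γ(G_ℂ(H))` equals the number of elliptic
conjugacy classes of `Γ`. -/
theorem finrank_elliptic_quotient_eq_card_elliptic_classes
    (ρ : Representation ℝ Γ E) :
    Module.finrank ℂ
      (↥(charSpace Γ) ⧸ (indSub Γ ρ).comap (charSpace Γ).subtype) =
    {c : ConjClasses Γ | ∃ γ : Γ, ConjClasses.mk γ = c ∧
      IsElliptic Γ ρ γ}.ncard := by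
  have hle2 : indSub Γ ρ ≤ charSpace Γ := by
    rw [charSpace_eq_classFun Γ, indSub_eq_ellVanish Γ ρ]
    exact fun f hf => hf.1
  have hq := Submodule.finrank_quotient_add_finrank ((indSub Γ ρ).comap (charSpace Γ).subtype)
  have hcomap : Module.finrank ℂ ↥((indSub Γ ρ).comap (charSpace Γ).subtype) =
      Module.finrank ℂ ↥(indSub Γ ρ) := (Submodule.comapSubtypeEquivOfLe hle2).finrank_eq
  rw [hcomap] at hq
  have h3 : Module.finrank ℂ ↥(charSpace Γ) = Nat.card (ConjClasses Γ) := by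
    rw [charSpace_eq_classFun Γ]; exact finrank_classFun Γ
  have h4 : Module.finrank ℂ ↥(indSub Γ ρ) =
      Nat.card {c : ConjClasses Γ // ¬ IsElliptic Γ ρ (crep Γ c)} := by
    rw [indSub_eq_ellVanish Γ ρ]; exact finrank_ellVanish Γ ρ
  rw [h3, h4] at hq
  have hset : {c : ConjClasses Γ | ∃ γ : Γ, ConjClasses.mk γ = c ∧ IsElliptic Γ ρ γ} =
      {c : ConjClasses Γ | IsElliptic Γ ρ (crep Γ c)} := by
    ext c
    constructor
    · rintro ⟨γ, rfl, hγ⟩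
      exact (elliptic_crep_iff Γ ρ γ).mpr hγ
    · intro h
      exact ⟨crep Γ c, mk_crep Γ c, h⟩
  rw [hset, ← Nat.card_coe_set_eq]
  have hsplit : Nat.card {c : ConjClasses Γ // IsElliptic Γ ρ (crep Γ c)} +
      Nat.card {c : ConjClasses Γ // ¬ IsElliptic Γ ρ (crep Γ c)} =
      Nat.card (ConjClasses Γ) := by
    letI : Fintype (ConjClasses Γ) := Fintype.ofFinite _
    rw [Nat.card_eq_fintype_card, Nat.card_eq_fintype_card, Nat.card_eq_fintype_card,
      Fintype.card_subtype, Fintype.card_subtype]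
    exact Finset.card_filter_add_card_filter_not _
  have hcoe : Nat.card ↥{c : ConjClasses Γ | IsElliptic Γ ρ (crep Γ c)} =
      Nat.card {c : ConjClasses Γ // IsElliptic Γ ρ (crep Γ c)} := rfl
  rw [hcoe]
  omega

end
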